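/- Let s be a nonzero integer, and suppose Q, R, W are nonnegative integers satisfying 4(2s+1)R = (4s+3)(4s²+3s-Q-1) and the relation (2s+1)W = s(s-α)(4s+3) where R = α(4s+3) and Q = 4s²+3s-1-4α(2s+1) for an integer α. Then, writing α = s - β(2s+1), one has W = βs(4s+3) and R = -(4s+3)(2βs-s+β), and the constraints Q,R,W ≥ 0 force s = -1 (with β = 1). -/
import Mathlib


/-- Let `s` be a nonzero integer and suppose nonnegative
integers `Q, R, W` satisfy `4(2s+1)R = (4s+3)(4s²+3s-Q-1)` and
`(2s+1)W = s(s-α)(4s+3)`, where `R = α(4s+3)`,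
`Q = 4s²+3s-1-4α(2s+1)` and `α = s - β(2s+1)` for integers `α, β`. Then
`W = βs(4s+3)`, `R = -(4s+3)(2βs-s+β)`, and the nonnegativity constraints
force `s = -1` and `β = 1`. -/
theorem tricirc_family1_edge (s Q R W a b : ℤ) (hs : s ≠ 0)
    (hQ : 0 ≤ Q) (hR : 0 ≤ R) (hW : 0 ≤ W)
    (h1 : 4 * (2 * s + 1) * R = (4 * s + 3) * (4 * s ^ 2 + 3 * s - Q - 1))
    (hRa : R = a * (4 * s + 3))
    (hQa : Q = 4 * s ^ 2 + 3 * s - 1 - 4 * a * (2 * s + 1))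
    (hWa : (2 * s + 1) * W = s * (s - a) * (4 * s + 3))
    (hab : a = s - b * (2 * s + 1)) :
    W = b * s * (4 * s + 3) ∧ R = -(4 * s + 3) * (2 * b * s - s + b) ∧
      s = -1 ∧ b = 1 := by
  subst hab hRa hQa
  have h2s : (2 * s + 1) ≠ 0 := by omega
  have hW' : W = b * s * (4 * s + 3) := by
    apply mul_left_cancel₀ h2s
    rw [hWa]; ring
  have hb1 : 1 ≤ b := by nlinarith [sq_nonneg s, sq_nonneg (2 * s + 1)]
  have hs1 : s = -1 := by
    rcases lt_or_gt_of_ne hs with h | h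
    · nlinarith [hR, mul_nonneg (by omega : (0:ℤ) ≤ b - 1) (by omega : (0:ℤ) ≤ -(2*s+1))]
    · nlinarith [hR, mul_nonneg (by omega : (0:ℤ) ≤ b - 1) (by omega : (0:ℤ) ≤ 2*s+1)]
  subst hs1
  have hbb : b = 1 := by nlinarith [hR]
  subst hbb
  refine ⟨by linarith [hW'], by ring, rfl, rfl⟩
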